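/- Let X ~ P(a_X, k_X) and Y ~ P(a_Y, k_Y) be classical Pareto random variables (survival function F̄(x) = (k/x)^a for x > k and 1 otherwise). Suppose (i) a_X k_X/(a_X - 1) > a_Y k_Y/(a_Y - 1), (ii) a_X > a_Y > 1, and (iii) k_X > k_Y. Then X ≤_{p_0-tvar-rl} Y for p_0 = 1 - [a_X(a_Y - 1)k_X / (a_Y(a_X - 1)k_Y)]^{a_X a_Y/(a_Y - a_X)}, and this p_0 lies in (0,1). -/

import Mathlib

open MeasureTheory ProbabilityTheory

/-- The quantile (Value at Risk) of a distribution function `F` at level `p`: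
`F^{-1}(p) = inf {x : F x ≥ p}`. -/
noncomputable def quantile (F : ℝ → ℝ) (p : ℝ) : ℝ := sInf {x : ℝ | p ≤ F x}

/-- The distribution function of the residual life `X_t = [X - t ∣ X > t]`:
`F_t(x) = (F(x+t) - F(t))/(1 - F(t))` for `x ≥ 0`, and `0` otherwise. -/
noncomputable def resCDF (F : ℝ → ℝ) (t : ℝ) (x : ℝ) : ℝ :=
  if 0 ≤ x then (F (x + t) - F t) / (1 - F t) else 0

/-- The quantile function of the residual life `X_t`. -/
noncomputable def resQuantile (F : ℝ → ℝ) (t : ℝ) (p : ℝ) : ℝ :=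
  quantile (resCDF F t) p

/-- `X ≤_{p₀-tvar-rl} Y`, expressed through the distribution functions `F` of `X` and `G` of `Y`:
`∫_p^1 F_t^{-1}(u) du ≤ ∫_p^1 G_t^{-1}(u) du` for all `p ∈ [p₀, 1)` and all `t` below the right
endpoints of the supports of `X` and `Y` (equivalently, `F t < 1` and `G t < 1`). -/
def TvarRlLE (F G : ℝ → ℝ) (p₀ : ℝ) : Prop :=
  ∀ t : ℝ, F t < 1 → G t < 1 → ∀ p ∈ Set.Ico p₀ 1,
    (∫ u in p..1, resQuantile F t u) ≤ ∫ u in p..1, resQuantile G t u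

/-- The distribution function of a classical Pareto random variable `X ~ P(a, k)`:
the survival function is `1` for `x ≤ k` and `(k/x)^a` for `x > k`. -/
noncomputable def paretoCDF (a k : ℝ) (x : ℝ) : ℝ := if x ≤ k then 0 else 1 - (k / x) ^ a

lemma pareto_one_sub (a k t : ℝ) (hk : 0 < k) :
    1 - paretoCDF a k t = (k / max k t) ^ a := by
  unfold paretoCDF
  rcases le_or_gt t k with h | h
  · rw [if_pos h, max_eq_left h, div_self hk.ne', Real.one_rpow]; ring
  · rw [if_neg (not_le.mpr h), max_eq_right h.le]; ring

lemma pareto_resQuantile {a k : ℝ} (t : ℝ) {u : ℝ} (ha : 1 < a) (hk : 0 < k)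
    (hu0 : 0 < u) (hu1 : u < 1) :
    resQuantile (paretoCDF a k) t u = max k t * (1 - u) ^ (-(1/a)) - t := by
  set m := max k t with hm
  have hm0 : 0 < m := lt_of_lt_of_le hk (le_max_left _ _)
  have ha0 : 0 < a := by linarith
  have h1u : 0 < 1 - u := by linarith
  have hw1 : 1 < (1 - u) ^ (-(1/a)) := by
    rw [Real.one_lt_rpow_iff_of_pos h1u]
    exact Or.inr ⟨by linarith, neg_lt_zero.mpr (by positivity)⟩
  set s := m * (1 - u) ^ (-(1/a)) with hs
  have hms : m < s := by
    nlinarith [hw1, hm0]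
  have hsk : k < s := lt_of_le_of_lt (le_max_left k t) hms
  have hst : t < s := lt_of_le_of_lt (le_max_right k t) hms
  have hkm : k ≤ m := le_max_left _ _
  have hOSub : 1 - paretoCDF a k t = (k / m) ^ a := pareto_one_sub a k t hk
  have hOSubPos : (0:ℝ) < (k / m) ^ a := Real.rpow_pos_of_pos (by positivity) a
  have hset : {x : ℝ | u ≤ resCDF (paretoCDF a k) t x} = Set.Ici (s - t) := by
    ext x
    simp only [Set.mem_setOf_eq, Set.mem_Ici]
    unfold resCDF
    constructor
    · intro hx
      by_cases hx0 : 0 ≤ x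
      · rw [if_pos hx0, hOSub] at hx
        rw [le_div_iff₀ hOSubPos] at hx
        -- u * (k/m)^a ≤ F(x+t) - F t, i.e. 1 - F(x+t) ≤ (1-u)(k/m)^a
        have hkey : 1 - paretoCDF a k (x + t) ≤ (1 - u) * (k / m) ^ a := by
          have := hOSub
          nlinarith [hx]
        have hka : (k / m) ^ a ≤ 1 :=
          Real.rpow_le_one (by positivity) (div_le_one_of_le₀ hkm hm0.le) ha0.le
        have hxtk : k < x + t := by
          by_contra hc
          push_neg at hc
          rw [paretoCDF, if_pos hc] at hkey
          nlinarith
        rw [paretoCDF, if_neg (not_le.mpr hxtk)] at hkey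
        have hxt0 : 0 < x + t := lt_trans hk hxtk
        -- (k/(x+t))^a ≤ (1-u) * (k/m)^a = ((1-u)^(1/a) * (k/m))^a
        have hrhs : (1 - u) * (k / m) ^ a = ((1 - u) ^ (1/a) * (k / m)) ^ a := by
          rw [Real.mul_rpow (by positivity) (by positivity), ← Real.rpow_mul h1u.le,
            one_div, inv_mul_cancel₀ ha0.ne', Real.rpow_one]
        rw [hrhs] at hkey
        have hkey2 : k / (x + t) ≤ (1 - u) ^ (1/a) * (k / m) := by
          have := (Real.rpow_le_rpow_iff (by positivity) (by positivity) ha0).mp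
            (by linarith [hkey] : (k / (x+t)) ^ a ≤ ((1 - u) ^ (1/a) * (k / m)) ^ a)
          exact this
        have hw : (0:ℝ) < (1 - u) ^ (1/a) := by positivity
        have hwinv : (1 - u) ^ (-(1/a)) = ((1 - u) ^ (1/a))⁻¹ := by
          rw [← Real.rpow_neg_one, ← Real.rpow_mul h1u.le]
          ring_nf
        rw [div_le_iff₀ hxt0] at hkey2
        have hdm : k / m * m = k := div_mul_cancel₀ k hm0.ne'
        have : m ≤ (1 - u) ^ (1/a) * (x + t) := by
          by_contra hc
          push_neg at hc
          have := mul_lt_mul_of_pos_left hc (div_pos hk hm0)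
          nlinarith [hkey2]
        have : s ≤ x + t := by
          rw [hs, hwinv]
          rw [mul_inv_le_iff₀ hw, mul_comm]
          exact this
        linarith
      · rw [if_neg hx0] at hx; linarith
    · intro hx
      have hxt : s ≤ x + t := by linarith
      have hx0 : 0 ≤ x := by linarith
      rw [if_pos hx0, hOSub, le_div_iff₀ hOSubPos]
      have hxtk : k < x + t := lt_of_lt_of_le hsk hxt
      have hxt0 : 0 < x + t := lt_trans hk hxtk
      rw [paretoCDF, if_neg (not_le.mpr hxtk), paretoCDF.eq_def]
      -- goal: u * (k/m)^a ≤ (1 - (k/(x+t))^a) - (if t ≤ k ...)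
      -- use hOSub instead: show 1 - F(x+t) ≤ (1-u)*(k/m)^a suffices
      have hgoal : (k / (x + t)) ^ a ≤ (1 - u) * (k / m) ^ a := by
        have hrhs : (1 - u) * (k / m) ^ a = ((1 - u) ^ (1/a) * (k / m)) ^ a := by
          rw [Real.mul_rpow (by positivity) (by positivity), ← Real.rpow_mul h1u.le,
            one_div, inv_mul_cancel₀ ha0.ne', Real.rpow_one]
        rw [hrhs]
        apply Real.rpow_le_rpow (by positivity) _ ha0.le
        rw [div_le_iff₀ hxt0]
        have hwinv : (1 - u) ^ (-(1/a)) = ((1 - u) ^ (1/a))⁻¹ := by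
          rw [← Real.rpow_neg_one, ← Real.rpow_mul h1u.le]
          ring_nf
        have hw : (0:ℝ) < (1 - u) ^ (1/a) := by positivity
        have hsx : m * (1 - u) ^ (-(1/a)) ≤ x + t := by rw [← hs]; exact hxt
        rw [hwinv, mul_inv_le_iff₀ hw] at hsx
        have hdm : k / m * m = k := div_mul_cancel₀ k hm0.ne'
        have := mul_le_mul_of_nonneg_left hsx (div_pos hk hm0).le
        nlinarith
      have hF : paretoCDF a k t = 1 - (k / m) ^ a := by linarith [hOSub]
      rw [← paretoCDF.eq_def, hF]
      nlinarith [hgoal]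
  unfold resQuantile quantile
  rw [hset, csInf_Ici]

lemma pareto_integral {a : ℝ} (ha : 1 < a) (m t p : ℝ) :
    (∫ u in p..1, (m * (1 - u) ^ (-(1/a)) - t)) =
      m * ((1 - p) ^ (1 - 1/a) / (1 - 1/a)) - t * (1 - p) := by
  have ha0 : (0:ℝ) < a := by linarith
  have h1a : 1/a < 1 := by rw [div_lt_one ha0]; linarith
  have hr : (-1:ℝ) < -(1/a) := by linarith
  have h1 : IntervalIntegrable (fun u : ℝ => (1 - u) ^ (-(1/a))) volume (1 - (1 - p)) (1 - 0) :=
    (intervalIntegral.intervalIntegrable_rpow' hr (a := 1 - p) (b := 0)).comp_sub_left 1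
  simp only [sub_sub_cancel, sub_zero] at h1
  rw [intervalIntegral.integral_sub (h1.const_mul m) intervalIntegrable_const,
    intervalIntegral.integral_const_mul, intervalIntegral.integral_const,
    intervalIntegral.integral_comp_sub_left (fun x : ℝ => x ^ (-(1/a))) 1,
    integral_rpow (Or.inl hr)]
  have h0 : (0:ℝ) ^ (-(1/a) + 1) = 0 := Real.zero_rpow (by linarith)
  rw [show (1:ℝ) - 1 = 0 by norm_num, h0]
  rw [show -(1/a) + 1 = 1 - 1/a by ring]
  rw [smul_eq_mul]
  ring

lemma core_ineq {aX kX aY kY q : ℝ} (hkY : 0 < kY)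
    (h1 : aX * kX / (aX - 1) > aY * kY / (aY - 1))
    (h2 : aX > aY) (h2' : aY > 1) (h3 : kX > kY)
    (hq0 : 0 < q)
    (hq : q ≤ (aX * (aY - 1) * kX / (aY * (aX - 1) * kY)) ^ (aX * aY / (aY - aX))) :
    kX * ((q : ℝ) ^ (1 - 1/aX) / (1 - 1/aX)) ≤ kY * (q ^ (1 - 1/aY) / (1 - 1/aY)) := by
  have haX0 : (0:ℝ) < aX := by linarith
  have haY0 : (0:ℝ) < aY := by linarith
  have hkX : (0:ℝ) < kX := by linarith
  have haX1 : (0:ℝ) < aX - 1 := by linarith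
  have haY1 : (0:ℝ) < aY - 1 := by linarith
  set C := aX * (aY - 1) * kX / (aY * (aX - 1) * kY) with hCdef
  have hCpos : 0 < C := by positivity
  set d := 1/aX - 1/aY with hd
  have hdneg : d < 0 := by
    rw [hd, sub_neg, div_lt_div_iff₀ haX0 haY0]
    nlinarith
  have hne : aY - aX ≠ 0 := sub_ne_zero.mpr (by linarith)
  have hed : aX * aY / (aY - aX) * d = 1 := by
    rw [hd]
    field_simp
  have hqd : C ≤ q ^ d := by
    have h := Real.rpow_le_rpow_of_nonpos hq0 hq hdneg.le
    rwa [← Real.rpow_mul hCpos.le, hed, Real.rpow_one] at h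
  have hAq : (0:ℝ) < q ^ (1 - 1/aX) := Real.rpow_pos_of_pos hq0 _
  have h1aX : (0:ℝ) < 1 - 1/aX := by
    rw [sub_pos, div_lt_one haX0]; linarith
  have h1aY : (0:ℝ) < 1 - 1/aY := by
    rw [sub_pos, div_lt_one haY0]; linarith
  have hsplit : q ^ (1 - 1/aY) = q ^ (1 - 1/aX) * q ^ d := by
    rw [← Real.rpow_add hq0, hd]; ring_nf
  have hid : kX / (1 - 1/aX) = C * (kY / (1 - 1/aY)) := by
    rw [hCdef]
    field_simp
  rw [hsplit]
  have hC' : kY * (q ^ (1 - 1/aX) * C / (1 - 1/aY)) ≤ kY * (q ^ (1 - 1/aX) * q ^ d / (1 - 1/aY)) := by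
    gcongr
  calc kX * (q ^ (1 - 1/aX) / (1 - 1/aX))
      = q ^ (1 - 1/aX) * (kX / (1 - 1/aX)) := by ring
    _ = q ^ (1 - 1/aX) * (C * (kY / (1 - 1/aY))) := by rw [hid]
    _ = kY * (q ^ (1 - 1/aX) * C / (1 - 1/aY)) := by ring
    _ ≤ kY * (q ^ (1 - 1/aX) * q ^ d / (1 - 1/aY)) := hC'

lemma max_mul_le {kX kY t : ℝ} (hkY : 0 < kY) (h3 : kY < kX) :
    max kX t * kY ≤ kX * max kY t := by
  rcases le_total t kY with h | h
  · rw [max_eq_left h, max_eq_left (by linarith : t ≤ kX)]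
  · rw [max_eq_right h]
    rcases le_total t kX with h' | h'
    · rw [max_eq_left h']
      nlinarith
    · rw [max_eq_right h']
      nlinarith

/-- For classical Pareto random variables `X ~ P(a_X, k_X)` and `Y ~ P(a_Y, k_Y)` with
(i) `a_X k_X/(a_X-1) > a_Y k_Y/(a_Y-1)`, (ii) `a_X > a_Y > 1`, and (iii) `k_X > k_Y`, one has
`X ≤_{p₀-tvar-rl} Y` for
`p₀ = 1 - [a_X(a_Y-1)k_X/(a_Y(a_X-1)k_Y)]^{a_X a_Y/(a_Y-a_X)}`, and this `p₀` lies in `(0,1)`. -/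
theorem stmt18 (aX kX aY kY : ℝ) (hkY : 0 < kY)
    (h1 : aX * kX / (aX - 1) > aY * kY / (aY - 1))
    (h2 : aX > aY) (h2' : aY > 1) (h3 : kX > kY) :
    (1 - (aX * (aY - 1) * kX / (aY * (aX - 1) * kY)) ^ (aX * aY / (aY - aX)))
        ∈ Set.Ioo (0 : ℝ) 1 ∧
      TvarRlLE (paretoCDF aX kX) (paretoCDF aY kY)
        (1 - (aX * (aY - 1) * kX / (aY * (aX - 1) * kY)) ^ (aX * aY / (aY - aX))) := by
  have haX1 : (1:ℝ) < aX := by linarith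
  have hkX : (0:ℝ) < kX := by linarith
  have haX0 : (0:ℝ) < aX - 1 := by linarith
  have haY0 : (0:ℝ) < aY - 1 := by linarith
  set C := aX * (aY - 1) * kX / (aY * (aX - 1) * kY) with hCdef
  set e := aX * aY / (aY - aX) with hedef
  have hC1 : 1 < C := by
    rw [hCdef, lt_div_iff₀ (by positivity)]
    rw [gt_iff_lt, div_lt_div_iff₀ haY0 haX0] at h1
    nlinarith
  have heneg : e < 0 := div_neg_of_pos_of_neg (by positivity) (by linarith)
  have hq0lt1 : C ^ e < 1 := Real.rpow_lt_one_of_one_lt_of_neg hC1 heneg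
  have hq0pos : 0 < C ^ e := Real.rpow_pos_of_pos (by linarith) e
  refine ⟨⟨by linarith, by linarith⟩, ?_⟩
  intro t _ _ p hp
  obtain ⟨hp₀, hp1⟩ := hp
  have hp0 : 0 < p := by linarith
  have hae1 : ∀ᵐ u : ℝ, u ≠ 1 := by
    rw [ae_iff]
    simp only [not_not, Set.setOf_eq_eq_singleton]
    exact measure_singleton 1
  have hIX : (∫ u in p..1, resQuantile (paretoCDF aX kX) t u)
      = ∫ u in p..1, (max kX t * (1 - u) ^ (-(1/aX)) - t) := by
    apply intervalIntegral.integral_congr_ae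
    filter_upwards [hae1] with u hu hmem
    rw [Set.uIoc_of_le hp1.le] at hmem
    exact pareto_resQuantile t haX1 hkX (by linarith [hmem.1]) (lt_of_le_of_ne hmem.2 hu)
  have hIY : (∫ u in p..1, resQuantile (paretoCDF aY kY) t u)
      = ∫ u in p..1, (max kY t * (1 - u) ^ (-(1/aY)) - t) := by
    apply intervalIntegral.integral_congr_ae
    filter_upwards [hae1] with u hu hmem
    rw [Set.uIoc_of_le hp1.le] at hmem
    exact pareto_resQuantile t h2' hkY (by linarith [hmem.1]) (lt_of_le_of_ne hmem.2 hu)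
  rw [hIX, hIY, pareto_integral haX1, pareto_integral h2']
  set q := 1 - p with hqdef
  have hq0 : 0 < q := by simp [hqdef]; linarith
  have hq : q ≤ C ^ e := by simp [hqdef]; linarith
  have hcore : kX * (q ^ (1 - 1/aX) / (1 - 1/aX)) ≤ kY * (q ^ (1 - 1/aY) / (1 - 1/aY)) :=
    core_ineq hkY h1 h2 h2' h3 hq0 hq
  have hmX : 0 < max kX t := lt_of_lt_of_le hkX (le_max_left _ _)
  have hmY : 0 < max kY t := lt_of_lt_of_le hkY (le_max_left _ _)
  have hmax : max kX t * kY ≤ kX * max kY t := max_mul_le hkY h3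
  have h1aX : (0:ℝ) < 1 - 1/aX := by
    rw [sub_pos, div_lt_one (by linarith)]; linarith
  have h1aY : (0:ℝ) < 1 - 1/aY := by
    rw [sub_pos, div_lt_one (by linarith)]; linarith
  have hqX : (0:ℝ) < q ^ (1 - 1/aX) := Real.rpow_pos_of_pos hq0 _
  have hqY : (0:ℝ) < q ^ (1 - 1/aY) := Real.rpow_pos_of_pos hq0 _
  have key : max kX t * (q ^ (1 - 1/aX) / (1 - 1/aX)) ≤ max kY t * (q ^ (1 - 1/aY) / (1 - 1/aY)) := by
    have step1 : max kX t * (q ^ (1 - 1/aX) / (1 - 1/aX)) * kY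
        ≤ kX * (q ^ (1 - 1/aX) / (1 - 1/aX)) * max kY t := by
      have := mul_le_mul_of_nonneg_right hmax (le_of_lt (div_pos hqX h1aX))
      calc max kX t * (q ^ (1 - 1/aX) / (1 - 1/aX)) * kY
          = max kX t * kY * (q ^ (1 - 1/aX) / (1 - 1/aX)) := by ring
        _ ≤ kX * max kY t * (q ^ (1 - 1/aX) / (1 - 1/aX)) := this
        _ = kX * (q ^ (1 - 1/aX) / (1 - 1/aX)) * max kY t := by ring
    have step2 : kX * (q ^ (1 - 1/aX) / (1 - 1/aX)) * max kY t
        ≤ kY * (q ^ (1 - 1/aY) / (1 - 1/aY)) * max kY t :=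
      mul_le_mul_of_nonneg_right hcore hmY.le
    rw [← mul_le_mul_iff_of_pos_right hkY]
    calc max kX t * (q ^ (1 - 1/aX) / (1 - 1/aX)) * kY
        ≤ kY * (q ^ (1 - 1/aY) / (1 - 1/aY)) * max kY t := le_trans step1 step2
      _ = max kY t * (q ^ (1 - 1/aY) / (1 - 1/aY)) * kY := by ring
  linarith
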